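/- Let w = s_1…s_n be a word in the Farey binary tree with n ≥ 2, and let w′ = w·s_n be the word obtained by appending one more copy of the last symbol of w. Then every degree value occurring among the inner degrees of the Haros graph G_{⟨w′⟩} already occurs among the inner degrees of G_{⟨w⟩}; i.e. repeating a symbol generates no new degree value except at the boundary node. -/
import Mathlib


/-- Symbols for paths in the Farey binary tree. -/
inductive LR
  | L
  | R
deriving DecidableEq

/-- One step in the Farey binary tree: update the current pair of fractions
(represented as pairs (numerator, denominator) of naturals). -/
def fareyStep : ((ℕ × ℕ) × (ℕ × ℕ)) → LR → ((ℕ × ℕ) × (ℕ × ℕ))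
  | ((a, b), (c, d)), LR.L => ((a, b), (a + c, b + d))
  | ((a, b), (c, d)), LR.R => ((a + c, b + d), (c, d))

/-- The final pair of fractions of a word: after reading the first symbol `L`
the current pair is (0/1, 1/1); the remaining symbols update it. -/
def finalPair (w : List LR) : (ℕ × ℕ) × (ℕ × ℕ) :=
  w.tail.foldl fareyStep ((0, 1), (1, 1))

/-- The value ⟨w⟩ of a word: the mediant of its final pair, as (numerator, denominator). -/
def value (w : List LR) : ℕ × ℕ :=
  ((finalPair w).1.1 + (finalPair w).2.1, (finalPair w).1.2 + (finalPair w).2.2)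

/-- A word over {L,R} is a Farey word when its first symbol is `L`. -/
def IsFareyWord (w : List LR) : Prop := w.head? = some LR.L

/-- Concatenation of degree sequences:
[a₁,…,a_s] ⊕ [b₁,…,b_t] = [a₁+1, a₂, …, a_{s−1}, a_s+b₁, b₂, …, b_{t−1}, b_t+1]. -/
def oplus (A B : List ℕ) : List ℕ :=
  (A.dropLast.modifyHead (· + 1)) ++ [A.getLastD 0 + B.headD 0] ++ B.tail.dropLast
    ++ [B.getLastD 0 + 1]

/-- Update of the pair (D(left ancestor), D(right ancestor)) of unreduced degree
sequences along one symbol. -/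
def degStep : (List ℕ × List ℕ) → LR → (List ℕ × List ℕ)
  | (A, B), LR.L => (A, oplus A B)
  | (A, B), LR.R => (oplus A B, B)

/-- The pair (D(a/b), D(c/d)) of unreduced degree sequences of the final pair of a word;
0/1 and 1/1 are both assigned the list [1,1]. -/
def degPair (w : List LR) : List ℕ × List ℕ :=
  w.tail.foldl degStep ([1, 1], [1, 1])

/-- The unreduced degree sequence D(⟨w⟩) = D(a/b) ⊕ D(c/d) of the value of a word. -/
def Dseq (w : List LR) : List ℕ :=
  oplus (degPair w).1 (degPair w).2

/-- Reduction: [k₁,…,k_{q+1}] becomes [k₂,…,k_q, k₁+k_{q+1}]; the last entry is the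
boundary degree and the remaining ones are the inner degrees. -/
def reduce (D : List ℕ) : List ℕ :=
  D.tail.dropLast ++ [D.headD 0 + D.getLastD 0]

/-- The reduced degree sequence of the Haros graph G_{⟨w⟩}. -/
def degSeq (w : List LR) : List ℕ := reduce (Dseq w)

/-- Degree-distribution entropy S of the Haros graph G_{⟨w⟩}:
S = −Σ_k P(k)·ln P(k), summed over the degree values occurring in the reduced
degree sequence, where P(k) = m(k)/q. -/
noncomputable def Sent (w : List LR) : ℝ :=
  -∑ k ∈ (degSeq w).toFinset,
    (((degSeq w).count k : ℝ) / ((value w).2 : ℝ)) *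
      Real.log (((degSeq w).count k : ℝ) / ((value w).2 : ℝ))

/-- Reduced entropy H of the Haros graph G_{⟨w⟩} (with the convention 0·ln 0 = 0,
automatic since Real.log 0 = 0). -/
noncomputable def Hent (w : List LR) : ℝ :=
  let x : ℝ := ((value w).1 : ℝ) / ((value w).2 : ℝ)
  if x ≤ 1 / 2 then
    Sent w + 2 * x * Real.log x + (1 - 2 * x) * Real.log (1 - 2 * x)
  else
    Sent w + 2 * (1 - x) * Real.log (1 - x) + (2 * x - 1) * Real.log (2 * x - 1)


namespace Statement7Aux

lemma getLast?_form (x y : ℕ) (M : List ℕ) : (x :: (M ++ [y])).getLast? = some y := by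
  rw [show x :: (M ++ [y]) = (x :: M) ++ [y] by simp, List.getLast?_concat]

lemma dropLast_form (x y : ℕ) (M : List ℕ) : (x :: (M ++ [y])).dropLast = x :: M := by
  rw [show x :: (M ++ [y]) = (x :: M) ++ [y] by simp, List.dropLast_concat]

lemma oplus_form (x y u v : ℕ) (M N : List ℕ) :
    oplus (x :: (M ++ [y])) (u :: (N ++ [v])) =
      (x+1) :: ((M ++ [y+u] ++ N) ++ [v+1]) := by
  simp [oplus, dropLast_form, getLast?_form, List.getLastD_eq_getLast?]

lemma reduce_form (x y : ℕ) (M : List ℕ) :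
    reduce (x :: (M ++ [y])) = M ++ [x+y] := by
  simp [reduce, getLast?_form, List.getLastD_eq_getLast?, List.dropLast_concat]

lemma degStep_L (p : List ℕ × List ℕ) : degStep p LR.L = (p.1, oplus p.1 p.2) := by
  cases p; rfl

lemma degStep_R (p : List ℕ × List ℕ) : degStep p LR.R = (oplus p.1 p.2, p.2) := by
  cases p; rfl

def Good (A : List ℕ) : Prop := ∃ x M y, A = x :: (M ++ [y])

lemma good_oplus {A B : List ℕ} (hA : Good A) (hB : Good B) : Good (oplus A B) := by
  obtain ⟨x, M, y, rfl⟩ := hA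
  obtain ⟨u, N, v, rfl⟩ := hB
  exact ⟨x+1, M ++ [y+u] ++ N, v+1, oplus_form x y u v M N⟩

lemma good_degFold (l : List LR) :
    Good (l.foldl degStep ([1,1],[1,1])).1 ∧ Good (l.foldl degStep ([1,1],[1,1])).2 := by
  induction l using List.reverseRecOn with
  | nil => exact ⟨⟨1, [], 1, rfl⟩, ⟨1, [], 1, rfl⟩⟩
  | append_singleton l s ih =>
    rw [List.foldl_append]
    cases s
    · rw [List.foldl_cons, List.foldl_nil, degStep_L]
      exact ⟨ih.1, good_oplus ih.1 ih.2⟩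
    · rw [List.foldl_cons, List.foldl_nil, degStep_R]
      exact ⟨good_oplus ih.1 ih.2, ih.2⟩

lemma lastL (l : List LR) (h : l.getLast? = some LR.L) :
    ∃ x M y N v, l.foldl degStep ([1,1],[1,1]) = (x :: (M ++ [y]), (x+1) :: (N ++ [v])) := by
  induction l using List.reverseRecOn with
  | nil => simp at h
  | append_singleton l s ih =>
    rw [List.getLast?_concat] at h
    obtain rfl : s = LR.L := by cases s <;> simp_all
    obtain ⟨⟨x, M, y, hA⟩, ⟨u, N, v, hB⟩⟩ := good_degFold l
    rw [List.foldl_append, List.foldl_cons, List.foldl_nil, degStep_L,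
      hA, hB, oplus_form]
    exact ⟨x, M, y, (M ++ [y+u] ++ N), v+1, rfl⟩

lemma lastR (l : List LR) (h : l.getLast? = some LR.R) :
    ∃ x M u N v, l.foldl degStep ([1,1],[1,1]) = (x :: (M ++ [v+1]), u :: (N ++ [v])) := by
  induction l using List.reverseRecOn with
  | nil => simp at h
  | append_singleton l s ih =>
    rw [List.getLast?_concat] at h
    obtain rfl : s = LR.R := by cases s <;> simp_all
    obtain ⟨⟨x, M, y, hA⟩, ⟨u, N, v, hB⟩⟩ := good_degFold l
    rw [List.foldl_append, List.foldl_cons, List.foldl_nil, degStep_R,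
      hA, hB, oplus_form]
    exact ⟨x+1, (M ++ [y+u] ++ N), u, N, v, rfl⟩

end Statement7Aux

open Statement7Aux in
/-- appending one more copy of the last symbol of a word w of length ≥ 2
generates no new degree value among the inner degrees: every value occurring among the
inner degrees of G_{⟨w·s_n⟩} already occurs among the inner degrees of G_{⟨w⟩}. -/
theorem statement7 (w : List LR) (hw : IsFareyWord w) (hlen : 2 ≤ w.length)
    (s : LR) (hs : w.getLast? = some s) :
    ∀ k ∈ (degSeq (w ++ [s])).dropLast, k ∈ (degSeq w).dropLast := by
  obtain ⟨a, t, rfl⟩ : ∃ a t, w = a :: t := by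
    cases w with
    | nil => simp at hlen
    | cons a t => exact ⟨a, t, rfl⟩
  have ht : t ≠ [] := by
    cases t with
    | nil => simp at hlen
    | cons b t' => simp
  have hs' : t.getLast? = some s := by
    rw [List.getLast?_cons] at hs
    obtain ⟨x, hx⟩ := Option.isSome_iff_exists.1 ((List.getLast?_isSome).2 ht)
    rw [hx] at hs ⊢
    simpa using hs
  have htail : (a :: t ++ [s]).tail = t ++ [s] := rfl
  cases s with
  | L =>
    obtain ⟨x, M, y, N, v, hAB⟩ := lastL t hs'
    have h1 : degSeq (a :: t) = (M ++ [y+(x+1)] ++ N) ++ [(x+1)+(v+1)] := by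
      rw [degSeq, Dseq, degPair, show (a :: t).tail = t from rfl, hAB]
      simp only
      rw [oplus_form, reduce_form]
    have h2 : degSeq (a :: t ++ [LR.L]) =
        (M ++ [y+(x+1)] ++ (M ++ [y+(x+1)] ++ N)) ++ [(x+1)+(v+1+1)] := by
      rw [degSeq, Dseq, degPair, htail, List.foldl_append, hAB,
        List.foldl_cons, List.foldl_nil, degStep_L]
      simp only
      rw [oplus_form, oplus_form, reduce_form]
    rw [h1, h2, List.dropLast_concat, List.dropLast_concat]
    intro k hk
    simp only [List.mem_append, List.mem_singleton] at hk ⊢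
    tauto
  | R =>
    obtain ⟨x, M, u, N, v, hAB⟩ := lastR t hs'
    have h1 : degSeq (a :: t) = (M ++ [(v+1)+u] ++ N) ++ [(x+1)+(v+1)] := by
      rw [degSeq, Dseq, degPair, show (a :: t).tail = t from rfl, hAB]
      simp only
      rw [oplus_form, reduce_form]
    have h2 : degSeq (a :: t ++ [LR.R]) =
        ((M ++ [(v+1)+u] ++ N) ++ [(v+1)+u] ++ N) ++ [(x+1+1)+(v+1)] := by
      rw [degSeq, Dseq, degPair, htail, List.foldl_append, hAB,
        List.foldl_cons, List.foldl_nil, degStep_R]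
      simp only
      rw [oplus_form, oplus_form, reduce_form]
    rw [h1, h2, List.dropLast_concat, List.dropLast_concat]
    intro k hk
    simp only [List.mem_append, List.mem_singleton] at hk ⊢
    tauto
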